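/- Let G be a finite group and V a nonzero irreducible finite-dimensional complex representation of G which is isomorphic to its dual representation V* but such that the only G-invariant symmetric bilinear form on V is zero (i.e. V is a quaternionic-type representation). Then the order of G is divisible by 4. -/

import Mathlib

open LinearMap

section aux
variable {G : Type} [Group G] [Fintype G]
variable {V : Type} [AddCommGroup V] [Module ℂ V] [FiniteDimensional ℂ V] [Nontrivial V]
variable (ρ : Representation ℂ G V)

lemma aux_schur (hirr : IsSimpleModule (MonoidAlgebra ℂ G) ρ.asModule)
    (T : V →ₗ[ℂ] V) (hT : ∀ g : G, ρ g * T = T * ρ g) :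
    ∃ c : ℂ, T = c • LinearMap.id := by
  obtain ⟨c, hc⟩ := Module.End.exists_eigenvalue (T : Module.End ℂ V)
  refine ⟨c, ?_⟩
  set K : Submodule ℂ V := LinearMap.ker (T - c • LinearMap.id) with hK
  have hmem : ∀ v : V, v ∈ K ↔ T v = c • v := by
    intro v
    simp [hK, LinearMap.mem_ker, sub_eq_zero]
  have hKstable : ∀ (g : G) (v : V), v ∈ K → ρ g v ∈ K := by
    intro g v hv
    rw [hmem] at hv ⊢
    have : T (ρ g v) = ρ g (T v) := by
      have := congrArg (fun f => f v) (hT g)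
      simp only [Module.End.mul_apply] at this
      simpa using this.symm
    rw [this, hv, map_smul]
  have hKalg : ∀ (r : MonoidAlgebra ℂ G) (v : V), v ∈ K → ρ.asAlgebraHom r v ∈ K := by
    intro r v hv
    induction r using MonoidAlgebra.induction_linear with
    | zero => simpa using K.zero_mem
    | add f g hf hg => rw [map_add, LinearMap.add_apply]; exact K.add_mem hf hg
    | single g b =>
      rw [Representation.asAlgebraHom_single]
      exact K.smul_mem b (hKstable g v hv)
  let W : Submodule (MonoidAlgebra ℂ G) ρ.asModule :=
    { carrier := { v : ρ.asModule | ρ.asModuleEquiv v ∈ K }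
      add_mem' := fun ha hb => by
        simp only [Set.mem_setOf_eq, map_add] at *
        exact K.add_mem ha hb
      zero_mem' := by simp only [Set.mem_setOf_eq, map_zero]; exact K.zero_mem
      smul_mem' := fun r v hv => by
        simp only [Set.mem_setOf_eq] at *
        rw [Representation.asModuleEquiv_map_smul]
        exact hKalg r _ hv }
  obtain ⟨v0, hv0⟩ := hc.exists_hasEigenvector
  have hWne : W ≠ ⊥ := by
    intro h
    have hv0K : (ρ.asModuleEquiv.symm v0) ∈ W := by
      show ρ.asModuleEquiv (ρ.asModuleEquiv.symm v0) ∈ K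
      rw [LinearEquiv.apply_symm_apply, hmem]
      exact hv0.apply_eq_smul
    rw [h, Submodule.mem_bot] at hv0K
    apply hv0.right
    have := congrArg ρ.asModuleEquiv hv0K
    simpa using this
  have hWtop : W = ⊤ := (IsSimpleOrder.eq_bot_or_eq_top (self := hirr.1) W).resolve_left hWne
  have hKtop : K = ⊤ := by
    rw [Submodule.eq_top_iff']
    intro v
    have : (ρ.asModuleEquiv.symm v) ∈ W := by rw [hWtop]; trivial
    have h' : ρ.asModuleEquiv (ρ.asModuleEquiv.symm v) ∈ K := this
    rwa [LinearEquiv.apply_symm_apply] at h'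
  have : T - c • LinearMap.id = 0 := LinearMap.ker_eq_top.mp hKtop
  have := sub_eq_zero.mp this
  simpa using this
end aux

section aux2
variable {G : Type} [Group G] [Fintype G]
variable {V : Type} [AddCommGroup V] [Module ℂ V] [FiniteDimensional ℂ V] [Nontrivial V]
variable (ρ : Representation ℂ G V)

lemma aux_trace_sum {ι : Type} [Fintype ι] [DecidableEq ι] (b : Module.Basis ι ℂ V) (f : V →ₗ[ℂ] V) :
    trace ℂ V f = ∑ i, b.repr (f (b i)) i := by
  rw [LinearMap.trace_eq_matrix_trace ℂ b, Matrix.trace]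
  simp [LinearMap.toMatrix_apply, Matrix.diag]

lemma aux_trace_smulRight (ψ : Module.Dual ℂ V) (v : V) :
    trace ℂ V (ψ.smulRight v) = ψ v := by
  set b := Module.finBasis ℂ V
  rw [aux_trace_sum b]
  simp only [LinearMap.smulRight_apply, map_smul]
  conv_rhs => rw [← b.sum_repr v]
  rw [map_sum]
  simp only [map_smul, smul_eq_mul, Finsupp.smul_apply]
  exact Finset.sum_congr rfl fun i _ => mul_comm _ _

lemma aux_orth (hirr : IsSimpleModule (MonoidAlgebra ℂ G) ρ.asModule)
    (ψ : Module.Dual ℂ V) (v : V) :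
    ∃ c : ℂ, (∀ (φ : Module.Dual ℂ V) (w : V),
        ∑ g : G, φ (ρ g v) * ψ (ρ g⁻¹ w) = c * φ w) ∧
      (Module.finrank ℂ V : ℂ) * c = (Fintype.card G : ℂ) * ψ v := by
  set A : V →ₗ[ℂ] V := ψ.smulRight v with hA
  set T : V →ₗ[ℂ] V := ∑ g : G, ρ g * A * ρ g⁻¹ with hTdef
  have hT : ∀ h : G, ρ h * T = T * ρ h := by
    intro h
    rw [hTdef, Finset.mul_sum, Finset.sum_mul]
    refine Fintype.sum_equiv (Equiv.mulLeft h) _ _ fun g => ?_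
    simp only [Equiv.coe_mulLeft]
    have h2 : ρ g⁻¹ = ρ ((h*g)⁻¹) * ρ h := by
      rw [← map_mul]
      congr 1
      group
    rw [← mul_assoc, ← mul_assoc, ← map_mul, h2, ← mul_assoc]
  obtain ⟨c, hc⟩ := aux_schur ρ hirr T hT
  refine ⟨c, fun φ w => ?_, ?_⟩
  · have hTw : T w = c • w := by rw [hc]; simp
    have : T w = ∑ g : G, ψ (ρ g⁻¹ w) • ρ g v := by
      rw [hTdef, LinearMap.sum_apply]
      refine Finset.sum_congr rfl fun g _ => ?_
      simp [hA, Module.End.mul_apply]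
    rw [this] at hTw
    have := congrArg φ hTw
    rw [map_sum, map_smul] at this
    simp only [map_smul, smul_eq_mul] at this
    rw [← this]
    refine Finset.sum_congr rfl fun g _ => ?_
    ring
  · have h1 : trace ℂ V T = (Fintype.card G : ℂ) * ψ v := by
      rw [hTdef, map_sum]
      have : ∀ g : G, trace ℂ V (ρ g * A * ρ g⁻¹) = ψ v := by
        intro g
        rw [LinearMap.trace_mul_comm, ← mul_assoc, ← map_mul, inv_mul_cancel, map_one, one_mul]
        exact aux_trace_smulRight ψ v
      simp only [this, Finset.sum_const, Finset.card_univ, nsmul_eq_mul]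
    have h2 : trace ℂ V T = c * (Module.finrank ℂ V : ℂ) := by
      rw [hc, map_smul, LinearMap.trace_id]
      simp [mul_comm]
    rw [h2] at h1
    rw [mul_comm] at h1
    exact h1.trans rfl
end aux2

section auxA
variable {G : Type} [Group G] [Fintype G]
variable {V : Type} [AddCommGroup V] [Module ℂ V] [FiniteDimensional ℂ V] [Nontrivial V]







lemma aux_claimA (ρ : Representation ℂ G V)
    (hirr : IsSimpleModule (MonoidAlgebra ℂ G) ρ.asModule)
    (hdual : ∃ e : V ≃ₗ[ℂ] Module.Dual ℂ V, ∀ (g : G) (v : V), e (ρ g v) = ρ.dual g (e v))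
    (hsymm : ∀ B : V →ₗ[ℂ] V →ₗ[ℂ] ℂ, (∀ v w : V, B v w = B w v) →
      (∀ (g : G) (v w : V), B (ρ g v) (ρ g w) = B v w) → B = 0) :
    ∑ g : G, trace ℂ V (ρ (g * g)) = -(Fintype.card G : ℂ) := by
  obtain ⟨e, he⟩ := hdual
  have hcan : ∀ (h : G) (x : V), ρ h⁻¹ (ρ h x) = x := by
    intro h x
    rw [← Module.End.mul_apply, ← map_mul, inv_mul_cancel, map_one, Module.End.one_apply]
  -- invariance of the form
  have hinv : ∀ (g : G) (v w : V), e (ρ g v) (ρ g w) = e v w := by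
    intro g v w
    rw [he, Representation.dual_apply, Module.Dual.transpose_apply, LinearMap.comp_apply, hcan]
  -- skew-symmetry
  have hskew : ∀ v w : V, e w v = -(e v w) := by
    intro v w
    set Bl : V →ₗ[ℂ] V →ₗ[ℂ] ℂ := e.toLinearMap with hBl
    have h0 : Bl + Bl.flip = 0 := by
      apply hsymm
      · intro v w
        simp only [LinearMap.add_apply, LinearMap.flip_apply]
        ring
      · intro g v w
        simp only [LinearMap.add_apply, LinearMap.flip_apply, hBl,
          LinearEquiv.coe_coe, hinv]
    have := congrArg (fun B => B v w) h0
    simp only [LinearMap.add_apply, LinearMap.flip_apply, LinearMap.zero_apply, hBl,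
      LinearEquiv.coe_coe] at this
    linear_combination this
  set n := Module.finrank ℂ V with hn
  have hnpos : 0 < n := Module.finrank_pos
  set b := Module.finBasis ℂ V with hb
  set f : Fin n → V := fun i => e.symm (b.coord i) with hfdef
  have hf : ∀ (i : Fin n) (x : V), e (f i) x = b.coord i x := by
    intro i x
    simp only [hfdef, LinearEquiv.apply_symm_apply]
  have hexp1 : ∀ x y : V, e x y = ∑ k, b.coord k x * e (b k) y := by
    intro x y
    conv_lhs => rw [← b.sum_repr x]
    rw [map_sum, LinearMap.sum_apply]
    simp only [map_smul, LinearMap.smul_apply, smul_eq_mul, Module.Basis.coord_apply]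
  have hexp2 : ∀ x y : V, e x y = ∑ l, b.coord l y * e x (b l) := by
    intro x y
    conv_lhs => rw [← b.sum_repr y]
    rw [map_sum]
    simp only [map_smul, smul_eq_mul, Module.Basis.coord_apply, mul_comm]
  -- choice of orthogonality constants
  have horth : ∀ (i l : Fin n), ∃ c : ℂ,
      (∀ (φ : Module.Dual ℂ V) (w : V),
        ∑ g : G, φ (ρ g (b i)) * (b.coord l) (ρ g⁻¹ w) = c * φ w) ∧
      (n : ℂ) * c = (Fintype.card G : ℂ) * (b.coord l) (b i) :=
    fun i l => aux_orth ρ hirr (b.coord l) (b i)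
  choose c hc1 hc2 using horth
  have hcval : ∀ i l, c i l = if i = l then (Fintype.card G : ℂ) / n else 0 := by
    intro i l
    have h2 := hc2 i l
    rw [Module.Basis.coord_apply, Module.Basis.repr_self, Finsupp.single_apply] at h2
    have hne : (n : ℂ) ≠ 0 := Nat.cast_ne_zero.mpr hnpos.ne'
    by_cases h : i = l
    · rw [if_pos h] at h2
      rw [if_pos h, eq_div_iff hne]
      linear_combination h2
    · rw [if_neg h] at h2
      rw [if_neg h]
      rw [mul_zero] at h2
      exact (mul_eq_zero.mp h2).resolve_left hne
  -- pointwise key identity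
  have key : ∀ (g : G) (i : Fin n), b.coord i (ρ (g*g) (b i)) =
      -∑ k, ∑ l, e (b k) (b l) * (b.coord k (ρ g (b i)) * b.coord l (ρ g⁻¹ (f i))) := by
    intro g i
    have h1 : ρ (g*g) (b i) = ρ g (ρ g (b i)) := by rw [map_mul]; rfl
    have h2 : b.coord i (ρ (g*g) (b i)) = e (ρ g⁻¹ (f i)) (ρ g (b i)) := by
      rw [← hf i, h1]
      conv_lhs => rw [← hinv g⁻¹ (f i) (ρ g (ρ g (b i)))]
      rw [hcan]
    rw [h2, hskew (ρ g (b i)) (ρ g⁻¹ (f i)), hexp1 (ρ g (b i)) (ρ g⁻¹ (f i)), neg_inj]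
    refine Finset.sum_congr rfl fun k _ => ?_
    rw [hexp2 (b k) (ρ g⁻¹ (f i)), Finset.mul_sum]
    refine Finset.sum_congr rfl fun l _ => ?_
    ring
  -- per-index sum
  have per_i : ∀ i : Fin n, ∑ g : G, b.coord i (ρ (g*g) (b i))
      = -((Fintype.card G : ℂ) / n) := by
    intro i
    rw [Finset.sum_congr rfl fun g _ => key g i, Finset.sum_neg_distrib, Finset.sum_comm]
    have inner : ∀ k : Fin n, (∑ g : G, ∑ l, e (b k) (b l) *
        (b.coord k (ρ g (b i)) * b.coord l (ρ g⁻¹ (f i))))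
        = ((Fintype.card G : ℂ) / n) * (b.coord k (f i) * e (b k) (b i)) := by
      intro k
      rw [Finset.sum_comm]
      have hterm : ∀ l : Fin n, (∑ g : G, e (b k) (b l) *
          (b.coord k (ρ g (b i)) * b.coord l (ρ g⁻¹ (f i))))
          = if i = l then ((Fintype.card G : ℂ) / n) * (b.coord k (f i) * e (b k) (b l)) else 0 := by
        intro l
        rw [← Finset.mul_sum, hc1 i l (b.coord k) (f i), hcval i l]
        by_cases h : i = l
        · simp only [h, if_true]; ring
        · simp only [h, if_false]; ring
      rw [Finset.sum_congr rfl fun l _ => hterm l, Finset.sum_ite_eq]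
      simp
    rw [Finset.sum_congr rfl fun k _ => inner k, ← Finset.mul_sum, neg_inj]
    have : ∑ k, b.coord k (f i) * e (b k) (b i) = e (f i) (b i) := (hexp1 (f i) (b i)).symm
    rw [this, hf i (b i), Module.Basis.coord_apply, Module.Basis.repr_self]
    simp
  -- assemble
  have : ∑ g : G, trace ℂ V (ρ (g * g)) = ∑ g : G, ∑ i, b.coord i (ρ (g*g) (b i)) := by
    refine Finset.sum_congr rfl fun g _ => ?_
    rw [aux_trace_sum b]
    simp [Module.Basis.coord_apply]
  rw [this, Finset.sum_comm, Finset.sum_congr rfl fun i _ => per_i i]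
  have hne : (n : ℂ) ≠ 0 := Nat.cast_ne_zero.mpr hnpos.ne'
  simp only [Finset.sum_const, Finset.card_univ, Fintype.card_fin, nsmul_eq_mul]
  field_simp
end auxA

section grp
variable {G : Type} [Group G] [Fintype G]

lemma aux_sign_involution [DecidableEq G] (h4 : ¬ (4 ∣ Fintype.card G)) (t : G)
    (ht2 : orderOf t = 2) :
    Equiv.Perm.sign (MulAction.toPermHom G G t) = -1 := by
  set σ : Equiv.Perm G := MulAction.toPermHom G G t with hσ
  have hσapp : ∀ x : G, σ x = t * x := fun x => rfl
  have htsq : t ^ 2 = 1 := by rw [← ht2, pow_orderOf_eq_one]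
  have ht1 : t ≠ 1 := by
    intro h
    rw [h, orderOf_one] at ht2
    omega
  have hσ2 : σ ^ 2 = 1 := by rw [hσ, ← map_pow, htsq, map_one]
  have hσ1 : σ ≠ 1 := by
    intro h
    apply ht1
    have := congrArg (fun τ : Equiv.Perm G => τ 1) h
    simp only [hσapp, Equiv.Perm.one_apply, mul_one] at this
    exact this
  have hord : orderOf σ = 2 := orderOf_eq_prime hσ2 hσ1
  have hnofix : ∀ x : G, σ x ≠ x := by
    intro x h
    rw [hσapp] at h
    exact ht1 (mul_right_cancel (by rw [h, one_mul] : t * x = 1 * x))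
  have hsupp : σ.support = Finset.univ := by
    ext x
    simp [Equiv.Perm.mem_support, hnofix x]
  have hct : ∀ m ∈ σ.cycleType, m = 2 := by
    intro m hm
    have h1 := Equiv.Perm.two_le_of_mem_cycleType hm
    have h2 := Equiv.Perm.dvd_of_mem_cycleType hm
    rw [hord] at h2
    have := Nat.le_of_dvd (by norm_num) h2
    omega
  set m := Multiset.card σ.cycleType with hm
  have hrep : σ.cycleType = Multiset.replicate m 2 := Multiset.eq_replicate.mpr ⟨rfl, hct⟩
  have hsum : σ.cycleType.sum = Fintype.card G := by
    rw [Equiv.Perm.sum_cycleType, hsupp, Finset.card_univ]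
  have hsum2 : σ.cycleType.sum = 2 * m := by
    rw [hrep, Multiset.sum_replicate, smul_eq_mul]
    ring
  have hmodd : Odd m := by
    rcases Nat.even_or_odd m with he | ho
    · exfalso
      apply h4
      obtain ⟨j, hj⟩ := he
      rw [← hsum, hsum2, hj]
      exact ⟨j, by ring⟩
    · exact ho
  rw [Equiv.Perm.sign_of_cycleType]
  have hoddexp : Odd (σ.cycleType.sum + Multiset.card σ.cycleType) := by
    rw [hsum2, ← hm]
    obtain ⟨k, hk⟩ := hmodd
    exact ⟨3 * k + 1, by omega⟩
  exact hoddexp.neg_one_pow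

lemma aux_odd_subgroup (h4 : ¬ (4 ∣ Fintype.card G)) :
    ∃ N : Subgroup G, ∀ g : G, g ∈ N ↔ Odd (orderOf g) := by
  classical
  set φ : G →* ℤˣ := Equiv.Perm.sign.comp (MulAction.toPermHom G G) with hφ
  have hodd : ∀ x : G, Odd (orderOf x) → φ x = 1 := by
    intro x hx
    obtain ⟨k, hk⟩ := hx
    have h1 : (φ x) ^ orderOf x = 1 := by rw [← map_pow, pow_orderOf_eq_one, map_one]
    have h2 : (φ x) ^ 2 = 1 := Int.units_sq (φ x)
    calc φ x = ((φ x) ^ 2) ^ k * φ x := by rw [h2, one_pow, one_mul]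
      _ = (φ x) ^ (2 * k + 1) := by rw [← pow_mul, ← pow_succ]
      _ = 1 := by rw [← hk, h1]
  have heven : ∀ x : G, ¬ Odd (orderOf x) → φ x = -1 := by
    intro x hx
    have hxne : orderOf x ≠ 0 := (orderOf_pos x).ne'
    have hev : 2 ∣ orderOf x := (Nat.not_odd_iff_even.mp hx).two_dvd
    obtain ⟨d, hd⟩ := hev
    have hdpos : 0 < d := by omega
    have hdodd : Odd d := by
      rcases Nat.even_or_odd d with he | ho
      · exfalso
        apply h4
        obtain ⟨j, hj⟩ := he
        have h4' : 4 ∣ orderOf x := ⟨j, by omega⟩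
        exact h4'.trans orderOf_dvd_card
      · exact ho
    have hordt : orderOf (x ^ d) = 2 := by
      rw [orderOf_pow]
      have hg : (orderOf x).gcd d = d := Nat.gcd_eq_right ⟨2, by omega⟩
      rw [hg, hd, Nat.mul_div_cancel _ hdpos]
    have ht := aux_sign_involution h4 (x ^ d) hordt
    have h2 : (φ x) ^ 2 = 1 := Int.units_sq (φ x)
    obtain ⟨k, hk⟩ := hdodd
    have hstep : φ x = φ (x ^ d) := by
      rw [map_pow, hk, pow_succ, pow_mul, h2, one_pow, one_mul]
    rw [hstep, hφ, MonoidHom.comp_apply]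
    exact ht
  refine ⟨φ.ker, fun g => ?_⟩
  constructor
  · intro hg
    by_contra hodd'
    have h := heven g hodd'
    rw [MonoidHom.mem_ker] at hg
    rw [hg] at h
    exact absurd h (by decide)
  · intro h
    rw [MonoidHom.mem_ker]
    exact hodd g h
end grp

section grp
variable {G : Type} [Group G] [Fintype G]
variable {V : Type} [AddCommGroup V] [Module ℂ V] [FiniteDimensional ℂ V] [Nontrivial V]



lemma aux_subgroup_sum (ρ : Representation ℂ G V) (H : Subgroup G) [Fintype H] :
    ∃ C : ℕ, ∑ h : H, LinearMap.trace ℂ V (ρ ↑h) = (C : ℂ) := by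
  classical
  set ρH : Representation ℂ H V := ρ.comp H.subtype with hρH
  have hcne : ((Fintype.card H : ℂ)) ≠ 0 := Nat.cast_ne_zero.mpr Fintype.card_ne_zero
  haveI : Invertible ((Fintype.card H : ℂ)) := invertibleOfNonzero hcne
  refine ⟨Fintype.card H * Module.finrank ℂ ρH.invariants, ?_⟩
  have havg : Representation.averageMap ρH = (⅟(Fintype.card H : ℂ)) • ∑ h : H, ρH h := by
    simp only [Representation.averageMap, GroupAlgebra.average, map_smul, map_sum,
      MonoidAlgebra.of_apply, Representation.asAlgebraHom_single, one_smul]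
  have hsum : ∑ h : H, ρH h = (Fintype.card H : ℂ) • Representation.averageMap ρH := by
    rw [havg, smul_smul, mul_invOf_self, one_smul]
  have htr : LinearMap.trace ℂ V (Representation.averageMap ρH)
      = (Module.finrank ℂ ρH.invariants : ℂ) :=
    (Representation.isProj_averageMap ρH).trace
  calc ∑ h : H, LinearMap.trace ℂ V (ρ ↑h) = LinearMap.trace ℂ V (∑ h : H, ρH h) := by
        rw [map_sum]
        rfl
    _ = (Fintype.card H : ℂ) * (Module.finrank ℂ ρH.invariants : ℂ) := by
        rw [hsum, map_smul, htr, smul_eq_mul]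
    _ = ((Fintype.card H * Module.finrank ℂ ρH.invariants : ℕ) : ℂ) := by push_cast; ring

lemma aux_claimB (ρ : Representation ℂ G V) (h4 : ¬ (4 ∣ Fintype.card G)) :
    ∃ C : ℕ, ∑ g : G, LinearMap.trace ℂ V (ρ (g * g)) = (C : ℂ) := by
  classical
  obtain ⟨N, hN⟩ := aux_odd_subgroup h4
  have hord2 : ∀ g : G, ¬ Odd (orderOf g) →
      orderOf g = 2 * (orderOf g / 2) ∧ Odd (orderOf g / 2) := by
    intro g hg
    have hev : 2 ∣ orderOf g := (Nat.not_odd_iff_even.mp hg).two_dvd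
    obtain ⟨d, hd⟩ := hev
    have hne : orderOf g ≠ 0 := (orderOf_pos g).ne'
    have hdodd : Odd d := by
      rcases Nat.even_or_odd d with he | ho
      · exfalso
        apply h4
        obtain ⟨j, hj⟩ := he
        have h44 : (4:ℕ) ∣ orderOf g := ⟨j, by omega⟩
        exact h44.trans orderOf_dvd_card
      · exact ho
    have hd2 : orderOf g / 2 = d := by omega
    exact ⟨by omega, hd2 ▸ hdodd⟩
  set dec : G → G × G := fun g =>
    if Odd (orderOf g) then ((1 : G), g)
    else (g ^ (orderOf g / 2), g ^ (orderOf g / 2 + 1)) with hdec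
  set T : Finset (G × G) := Finset.univ.filter
    (fun p => p.1 * p.1 = 1 ∧ p.1 * p.2 = p.2 * p.1 ∧ Odd (orderOf p.2)) with hT
  have step1 : ∑ g : G, LinearMap.trace ℂ V (ρ (g * g))
      = ∑ p ∈ T, LinearMap.trace ℂ V (ρ (p.2 * p.2)) := by
    refine Finset.sum_nbij' dec (fun p => p.1 * p.2) ?_ ?_ ?_ ?_ ?_
    · intro g _
      rw [hT, Finset.mem_filter]
      refine ⟨Finset.mem_univ _, ?_⟩
      simp only [hdec]
      by_cases h : Odd (orderOf g)
      · rw [if_pos h]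
        exact ⟨by simp, by simp, h⟩
      · rw [if_neg h]
        obtain ⟨hgeq, hdodd⟩ := hord2 g h
        refine ⟨?_, ?_, ?_⟩
        · show g ^ (orderOf g / 2) * g ^ (orderOf g / 2) = 1
          rw [← pow_add]
          have he : orderOf g / 2 + orderOf g / 2 = orderOf g := by omega
          rw [he, pow_orderOf_eq_one]
        · show g ^ (orderOf g / 2) * g ^ (orderOf g / 2 + 1)
            = g ^ (orderOf g / 2 + 1) * g ^ (orderOf g / 2)
          rw [← pow_add, ← pow_add, Nat.add_comm]
        · show Odd (orderOf (g ^ (orderOf g / 2 + 1)))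
          rw [orderOf_pow]
          have hgcd : (orderOf g).gcd (orderOf g / 2 + 1) = 2 := by
            apply Nat.dvd_antisymm
            · have h1 : (orderOf g).gcd (orderOf g / 2 + 1) ∣ orderOf g :=
                Nat.gcd_dvd_left _ _
              have h2 : (orderOf g).gcd (orderOf g / 2 + 1) ∣ 2 * (orderOf g / 2 + 1) :=
                (Nat.gcd_dvd_right _ _).mul_left 2
              have h3 := Nat.dvd_sub h2 h1
              have he : 2 * (orderOf g / 2 + 1) - orderOf g = 2 := by omega
              rwa [he] at h3
            · refine Nat.dvd_gcd ⟨orderOf g / 2, hgeq⟩ ?_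
              obtain ⟨k, hk⟩ := hdodd
              exact ⟨k + 1, by omega⟩
          rw [hgcd]
          exact hdodd
    · intro p _
      exact Finset.mem_univ _
    · intro g _
      simp only [hdec]
      by_cases h : Odd (orderOf g)
      · rw [if_pos h]
        simp
      · rw [if_neg h]
        obtain ⟨hgeq, -⟩ := hord2 g h
        show g ^ (orderOf g / 2) * g ^ (orderOf g / 2 + 1) = g
        rw [← pow_add]
        have he : orderOf g / 2 + (orderOf g / 2 + 1) = orderOf g + 1 := by omega
        rw [he, pow_succ, pow_orderOf_eq_one, one_mul]
    · intro p hp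
      rw [hT, Finset.mem_filter] at hp
      obtain ⟨-, ht2, hcomm, hodd⟩ := hp
      obtain ⟨t, n⟩ := p
      simp only at ht2 hcomm hodd ⊢
      by_cases h1 : t = 1
      · subst h1
        simp only [hdec]
        rw [one_mul, if_pos hodd]
      · have ht2' : t ^ 2 = 1 := by rw [pow_two]; exact ht2
        have hordt : orderOf t = 2 := orderOf_eq_prime ht2' h1
        have hcomm' : Commute t n := hcomm
        have hcop : (orderOf t).Coprime (orderOf n) := by
          rw [hordt]
          exact Nat.coprime_two_left.mpr hodd
        have hordtn : orderOf (t * n) = 2 * orderOf n := by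
          rw [hcomm'.orderOf_mul_eq_mul_orderOf_of_coprime hcop, hordt]
        have hnotodd : ¬ Odd (orderOf (t * n)) := by
          rw [hordtn]
          exact Nat.not_odd_iff_even.mpr ⟨orderOf n, by ring⟩
        simp only [hdec]
        rw [if_neg hnotodd]
        have hd2 : orderOf (t * n) / 2 = orderOf n := by omega
        rw [hd2]
        obtain ⟨k, hk⟩ := hodd
        have e1 : (t * n) ^ (orderOf n) = t := by
          rw [hcomm'.mul_pow, pow_orderOf_eq_one, mul_one, hk, pow_succ, pow_mul, ht2',
            one_pow, one_mul]
        have e2 : (t * n) ^ (orderOf n + 1) = n := by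
          rw [hcomm'.mul_pow]
          have h5 : t ^ (orderOf n + 1) = 1 := by
            rw [hk, show 2 * k + 1 + 1 = 2 * (k + 1) by ring, pow_mul, ht2', one_pow]
          rw [h5, one_mul, pow_succ, pow_orderOf_eq_one, one_mul]
        rw [e1, e2]
    · intro g _
      simp only [hdec]
      by_cases h : Odd (orderOf g)
      · rw [if_pos h]
      · rw [if_neg h]
        obtain ⟨hgeq, -⟩ := hord2 g h
        show LinearMap.trace ℂ V (ρ (g * g))
          = LinearMap.trace ℂ V (ρ (g ^ (orderOf g / 2 + 1) * g ^ (orderOf g / 2 + 1)))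
        congr 2
        rw [← pow_add]
        have he : orderOf g / 2 + 1 + (orderOf g / 2 + 1) = orderOf g + 2 := by omega
        rw [he, pow_add, pow_orderOf_eq_one, one_mul, pow_two]
  rw [step1]
  set A : G → Prop := fun t => t * t = 1 with hA
  set Bp : G → G → Prop := fun t n => t * n = n * t ∧ Odd (orderOf n) with hBp
  have step2 : ∑ p ∈ T, LinearMap.trace ℂ V (ρ (p.2 * p.2))
      = ∑ t ∈ Finset.univ.filter A, ∑ n ∈ Finset.univ.filter (Bp t),
          LinearMap.trace ℂ V (ρ (n * n)) := by
    rw [hT, Finset.sum_filter, Fintype.sum_prod_type]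
    conv_rhs => rw [Finset.sum_filter]
    refine Finset.sum_congr rfl fun t _ => ?_
    conv_rhs => rw [Finset.sum_filter]
    by_cases h : A t
    · rw [if_pos h]
      refine Finset.sum_congr rfl fun n _ => ?_
      rw [ite_and]
      rw [if_pos h]
    · rw [if_neg h]
      refine Finset.sum_eq_zero fun n _ => ?_
      rw [ite_and, if_neg h]
  rw [step2]
  -- squaring is a bijection on each fiber
  have step3 : ∀ t : G, ∑ n ∈ Finset.univ.filter (Bp t), LinearMap.trace ℂ V (ρ (n * n))
      = ∑ n ∈ Finset.univ.filter (Bp t), LinearMap.trace ℂ V (ρ n) := by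
    intro t
    refine Finset.sum_nbij' (fun n => n * n) (fun n => n ^ ((orderOf n + 1) / 2))
      ?_ ?_ ?_ ?_ ?_
    · intro n hn
      rw [Finset.mem_filter] at hn ⊢
      obtain ⟨-, hco, hodd⟩ := hn
      have hcn : Commute t n := hco
      refine ⟨Finset.mem_univ _, hcn.mul_right hcn, ?_⟩
      have hg : (orderOf n).gcd 2 = 1 := hodd.coprime_two_right
      show Odd (orderOf (n * n))
      rw [← pow_two, orderOf_pow, hg, Nat.div_one]
      exact hodd
    · intro n hn
      rw [Finset.mem_filter] at hn ⊢
      obtain ⟨-, hco, hodd⟩ := hn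
      have hcn : Commute t n := hco
      refine ⟨Finset.mem_univ _, hcn.pow_right _, ?_⟩
      have hdvd : orderOf (n ^ ((orderOf n + 1) / 2)) ∣ orderOf n := by
        apply orderOf_dvd_of_pow_eq_one
        rw [← pow_mul, mul_comm, pow_mul, pow_orderOf_eq_one, one_pow]
      rcases Nat.even_or_odd (orderOf (n ^ ((orderOf n + 1) / 2))) with he | ho
      · exfalso
        have h2 : 2 ∣ orderOf n := dvd_trans he.two_dvd hdvd
        rw [Nat.odd_iff] at hodd
        omega
      · exact ho
    · intro n hn
      rw [Finset.mem_filter] at hn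
      obtain ⟨-, -, hodd⟩ := hn
      have hg : (orderOf n).gcd 2 = 1 := hodd.coprime_two_right
      have hord : orderOf (n * n) = orderOf n := by
        rw [← pow_two, orderOf_pow, hg, Nat.div_one]
      show (n * n) ^ ((orderOf (n * n) + 1) / 2) = n
      rw [hord]
      obtain ⟨k, hk⟩ := hodd
      have hdiv : (orderOf n + 1) / 2 = k + 1 := by omega
      rw [hdiv, ← pow_two, ← pow_mul]
      have h2 : 2 * (k + 1) = orderOf n + 1 := by omega
      rw [h2, pow_succ, pow_orderOf_eq_one, one_mul]
    · intro n hn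
      rw [Finset.mem_filter] at hn
      obtain ⟨-, -, hodd⟩ := hn
      obtain ⟨k, hk⟩ := hodd
      have hdiv : (orderOf n + 1) / 2 = k + 1 := by omega
      show n ^ ((orderOf n + 1) / 2) * n ^ ((orderOf n + 1) / 2) = n
      rw [hdiv, ← pow_add]
      have h2 : k + 1 + (k + 1) = orderOf n + 1 := by omega
      rw [h2, pow_succ, pow_orderOf_eq_one, one_mul]
    · intro n _
      rfl
  -- each fiber sum is a nonnegative integer
  have step4 : ∀ t : G, ∃ C : ℕ,
      ∑ n ∈ Finset.univ.filter (Bp t), LinearMap.trace ℂ V (ρ n) = (C : ℂ) := by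
    intro t
    set H : Subgroup G := N ⊓ Subgroup.centralizer {t} with hH
    have hmemH : ∀ n : G, Bp t n ↔ n ∈ H := by
      intro n
      rw [hH, Subgroup.mem_inf, Subgroup.mem_centralizer_iff, hBp]
      constructor
      · rintro ⟨hco, hodd⟩
        exact ⟨(hN n).mpr hodd, fun h hh => by rw [Set.mem_singleton_iff] at hh; rw [hh]; exact hco⟩
      · rintro ⟨hn, hc⟩
        exact ⟨hc t rfl, (hN n).mp hn⟩
    obtain ⟨C, hC⟩ := aux_subgroup_sum ρ H
    refine ⟨C, ?_⟩
    rw [← hC]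
    refine Finset.sum_subtype _ (fun n => ?_) (fun n => LinearMap.trace ℂ V (ρ n))
    simp only [Finset.mem_filter, Finset.mem_univ, true_and]
    exact hmemH n
  have step5 : ∀ t : G, ∃ C : ℕ, t * t = 1 →
      ∑ n ∈ Finset.univ.filter (Bp t), LinearMap.trace ℂ V (ρ (n * n)) = (C : ℂ) := by
    intro t
    obtain ⟨C, hC⟩ := step4 t
    exact ⟨C, fun _ => (step3 t).trans hC⟩
  choose c hc using step5
  refine ⟨∑ t ∈ Finset.univ.filter A, c t, ?_⟩
  rw [Nat.cast_sum]
  refine Finset.sum_congr rfl fun t ht => ?_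
  rw [Finset.mem_filter] at ht
  exact hc t ht.2
end grp

/-- If a finite group `G` has a nonzero irreducible finite-dimensional complex
representation which is self-dual but admits no nonzero invariant symmetric bilinear form
(i.e. is of quaternionic type), then `4` divides the order of `G`. -/
theorem four_dvd_card_of_quaternionic_representation
    (G : Type) [Group G] [Fintype G]
    (V : Type) [AddCommGroup V] [Module ℂ V] [FiniteDimensional ℂ V] [Nontrivial V]
    (ρ : Representation ℂ G V)
    (hirr : IsSimpleModule (MonoidAlgebra ℂ G) ρ.asModule)
    (hdual : ∃ e : V ≃ₗ[ℂ] Module.Dual ℂ V, ∀ (g : G) (v : V), e (ρ g v) = ρ.dual g (e v))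
    (hsymm : ∀ B : V →ₗ[ℂ] V →ₗ[ℂ] ℂ, (∀ v w : V, B v w = B w v) →
      (∀ (g : G) (v w : V), B (ρ g v) (ρ g w) = B v w) → B = 0) :
    4 ∣ Fintype.card G := by
  by_contra h4
  have hA := aux_claimA ρ hirr hdual hsymm
  obtain ⟨C, hB⟩ := aux_claimB ρ h4
  rw [hA] at hB
  have hcast : ((C + Fintype.card G : ℕ) : ℂ) = 0 := by
    push_cast
    linear_combination -hB
  have h0 : C + Fintype.card G = 0 := Nat.cast_eq_zero.mp hcast
  have hpos := Fintype.card_pos (α := G)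
  omega
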